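/- Suppose (q(τ), Q(τ)) solves q' = -(1/2)qQ, Q' = (1/2)Q² + q² - 1 on an interval [τ₁, τ₂], with q(τ) > 0 and -√2 ≤ Q(τ) ≤ -√2 + ε for all τ ∈ [τ₁, τ₂], where 0 < ε < √2. Then √2 · ln(q(τ₂)/q(τ₁)) ≤ τ₂ - τ₁ ≤ (2/(√2 - ε)) · ln(q(τ₂)/q(τ₁)). -/

import Mathlib

open Real Set

lemma aux_mono (f f' : ℝ → ℝ) (a b : ℝ) (hab : a ≤ b)
    (hf : ∀ x ∈ Set.Icc a b, HasDerivAt f (f' x) x)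
    (h0 : ∀ x ∈ Set.Icc a b, 0 ≤ f' x) : f a ≤ f b := by
  have hmono : MonotoneOn f (Set.Icc a b) := by
    apply monotoneOn_of_deriv_nonneg (convex_Icc a b)
    · exact fun x hx => (hf x hx).continuousAt.continuousWithinAt
    · intro x hx
      exact (hf x (interior_subset hx)).differentiableAt.differentiableWithinAt
    · intro x hx
      rw [(hf x (interior_subset hx)).deriv]
      exact h0 x (interior_subset hx)
  exact hmono (Set.left_mem_Icc.2 hab) (Set.right_mem_Icc.2 hab) hab

/-- Lemma 2.1(a): along a solution with `q > 0` and `-√2 ≤ Q ≤ -√2 + ε`,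
`√2 ln(q(τ₂)/q(τ₁)) ≤ τ₂ - τ₁ ≤ (2/(√2-ε)) ln(q(τ₂)/q(τ₁))`. -/
theorem stmt_6 (q Q : ℝ → ℝ) (τ₁ τ₂ ε : ℝ) (hτ : τ₁ ≤ τ₂)
    (hε0 : 0 < ε) (hε : ε < Real.sqrt 2)
    (hq : ∀ τ ∈ Set.Icc τ₁ τ₂, HasDerivAt q (-(1/2) * q τ * Q τ) τ)
    (hQ : ∀ τ ∈ Set.Icc τ₁ τ₂, HasDerivAt Q ((1/2) * (Q τ)^2 + (q τ)^2 - 1) τ)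
    (hqpos : ∀ τ ∈ Set.Icc τ₁ τ₂, 0 < q τ)
    (hQlb : ∀ τ ∈ Set.Icc τ₁ τ₂, -Real.sqrt 2 ≤ Q τ)
    (hQub : ∀ τ ∈ Set.Icc τ₁ τ₂, Q τ ≤ -Real.sqrt 2 + ε) :
    Real.sqrt 2 * Real.log (q τ₂ / q τ₁) ≤ τ₂ - τ₁ ∧
    τ₂ - τ₁ ≤ (2 / (Real.sqrt 2 - ε)) * Real.log (q τ₂ / q τ₁) := by
  have hs2 : (0:ℝ) < Real.sqrt 2 := Real.sqrt_pos.2 (by norm_num)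
  have hlog : ∀ τ ∈ Set.Icc τ₁ τ₂,
      HasDerivAt (fun t => Real.log (q t)) (-(1/2) * Q τ) τ := by
    intro τ hτ'
    have h := (hq τ hτ').log (ne_of_gt (hqpos τ hτ'))
    have : (-(1/2) * q τ * Q τ) / q τ = -(1/2) * Q τ := by
      field_simp [(hqpos τ hτ').ne']
    rwa [this] at h
  have hL : Real.log (q τ₂ / q τ₁) = Real.log (q τ₂) - Real.log (q τ₁) :=
    Real.log_div (hqpos τ₂ (Set.right_mem_Icc.2 hτ)).ne' (hqpos τ₁ (Set.left_mem_Icc.2 hτ)).ne'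
  -- Upper bound on log growth
  have h1 : Real.log (q τ₂) - Real.log (q τ₁) ≤ (Real.sqrt 2 / 2) * (τ₂ - τ₁) := by
    have := aux_mono (fun t => (Real.sqrt 2 / 2) * t - Real.log (q t))
      (fun t => Real.sqrt 2 / 2 + (1/2) * Q t) τ₁ τ₂ hτ
      (fun x hx => by
        have := ((hasDerivAt_id x).const_mul (Real.sqrt 2 / 2)).sub (hlog x hx)
        exact this.congr_deriv (by ring))
      (fun x hx => by nlinarith [hQlb x hx])
    linarith
  -- Lower bound on log growth
  have h2 : ((Real.sqrt 2 - ε) / 2) * (τ₂ - τ₁) ≤ Real.log (q τ₂) - Real.log (q τ₁) := by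
    have := aux_mono (fun t => Real.log (q t) - ((Real.sqrt 2 - ε) / 2) * t)
      (fun t => -(1/2) * Q t - (Real.sqrt 2 - ε) / 2) τ₁ τ₂ hτ
      (fun x hx => (hlog x hx).sub (((hasDerivAt_id x).const_mul _).congr_deriv (by ring)))
      (fun x hx => by nlinarith [hQub x hx])
    linarith
  have hsq : Real.sqrt 2 * Real.sqrt 2 = 2 := Real.mul_self_sqrt (by norm_num)
  constructor
  · rw [hL]
    nlinarith
  · rw [hL]
    rw [div_mul_eq_mul_div, le_div_iff₀ (by linarith)]
    nlinarith
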